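/- Let n ≥ 9, let P ∈ PLS(2,3;n), and let α be a symbol that does not occur in the 2×3 upper-left subarray of P (the intersection of the two filled rows and three filled columns). Let j, k, l ∈ {3,…,n} be the rows with P(j,1) = α, P(k,2) = α and P(l,3) = α. Then there exists i ∈ {3,…,n} such that the symbols P(i,1), P(j,2), P(j,3) are pairwise distinct, the symbols P(k,1), P(i,2), P(k,3) are pairwise distinct, and the symbols P(l,1), P(l,2), P(i,3) are pairwise distinct (equivalently, row i replaces α). -/

import Mathlib

/-- An `n × n` partial Latin square: each cell holds at most one symbol from `Fin n`,
and each symbol occurs at most once in every row and at most once in every column. -/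
def IsPartialLatinSquare {n : ℕ} (P : Fin n → Fin n → Option (Fin n)) : Prop :=
  (∀ (i j j' : Fin n) (s : Fin n), P i j = some s → P i j' = some s → j = j') ∧
  (∀ (i i' j : Fin n) (s : Fin n), P i j = some s → P i' j = some s → i = i')

/-- An `n × n` Latin square. -/
def IsLatinSquare {n : ℕ} (L : Fin n → Fin n → Fin n) : Prop :=
  (∀ i : Fin n, Function.Injective (L i)) ∧
  (∀ j : Fin n, Function.Injective fun i => L i j)

/-- `P` is completable if some Latin square agrees with `P` on all its nonempty cells. -/
def Completable {n : ℕ} (P : Fin n → Fin n → Option (Fin n)) : Prop :=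
  ∃ L : Fin n → Fin n → Fin n, IsLatinSquare L ∧ ∀ i j s, P i j = some s → L i j = s

/-- (Kuhl–McGinn) Let `n ≥ 9`, `P ∈ PLS(2,3;n)`, and let `α` be a symbol not occurring
in the `2 × 3` upper-left subarray of `P`, occurring in columns `1, 2, 3` in rows
`j, k, l ≥ 3` respectively. Then some row `i ≥ 3` replaces `α`. -/
theorem stmt_15 (n : ℕ) (hn : 9 ≤ n)
    (P : Fin n → Fin n → Option (Fin n))
    (hP : IsPartialLatinSquare P)
    (hfill : ∀ i j : Fin n, P i j ≠ none ↔ (i.val < 2 ∨ j.val < 3))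
    (α : Fin n)
    (hα : ∀ i j : Fin n, i.val < 2 → j.val < 3 → P i j ≠ some α)
    (j k l : Fin n) (hj2 : 2 ≤ j.val) (hk2 : 2 ≤ k.val) (hl2 : 2 ≤ l.val)
    (hj : P j ⟨0, by omega⟩ = some α)
    (hk : P k ⟨1, by omega⟩ = some α)
    (hl : P l ⟨2, by omega⟩ = some α) :
    ∃ i : Fin n, 2 ≤ i.val ∧
      (P i ⟨0, by omega⟩ ≠ P j ⟨1, by omega⟩ ∧
        P i ⟨0, by omega⟩ ≠ P j ⟨2, by omega⟩ ∧
        P j ⟨1, by omega⟩ ≠ P j ⟨2, by omega⟩) ∧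
      (P k ⟨0, by omega⟩ ≠ P i ⟨1, by omega⟩ ∧
        P k ⟨0, by omega⟩ ≠ P k ⟨2, by omega⟩ ∧
        P i ⟨1, by omega⟩ ≠ P k ⟨2, by omega⟩) ∧
      (P l ⟨0, by omega⟩ ≠ P l ⟨1, by omega⟩ ∧
        P l ⟨0, by omega⟩ ≠ P i ⟨2, by omega⟩ ∧
        P l ⟨1, by omega⟩ ≠ P i ⟨2, by omega⟩) := by
  classical
  have h0 : (0:ℕ) < n := by omega
  have h1 : (1:ℕ) < n := by omega
  have h2 : (2:ℕ) < n := by omega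
  set c0 : Fin n := ⟨0, h0⟩ with hc0
  set c1 : Fin n := ⟨1, h1⟩ with hc1
  set c2 : Fin n := ⟨2, h2⟩ with hc2
  -- every cell in the first three columns is filled
  have hget : ∀ (r c : Fin n), c.val < 3 → ∃ s, P r c = some s := by
    intro r c hc
    exact Option.ne_none_iff_exists'.mp ((hfill r c).mpr (Or.inr hc))
  obtain ⟨a1, ha1⟩ := hget j c1 (by simp [hc1])
  obtain ⟨a2, ha2⟩ := hget j c2 (by simp [hc2])
  obtain ⟨b0, hb0⟩ := hget k c0 (by simp [hc0])
  obtain ⟨b2, hb2⟩ := hget k c2 (by simp [hc2])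
  obtain ⟨d0, hd0⟩ := hget l c0 (by simp [hc0])
  obtain ⟨d1, hd1⟩ := hget l c1 (by simp [hc1])
  -- two filled cells in the same row (distinct columns) hold distinct symbols
  have hrow : ∀ (r c c' : Fin n) (s s' : Fin n), P r c = some s → P r c' = some s' →
      c ≠ c' → (some s : Option (Fin n)) ≠ some s' := by
    intro r c c' s s' h h' hne he
    obtain rfl : s = s' := Option.some.inj he
    exact hne (hP.1 r c c' s h h')
  have hne01 : c0 ≠ c1 := fun h => by simp [hc0, hc1, Fin.ext_iff] at h
  have hne02 : c0 ≠ c2 := fun h => by simp [hc0, hc2, Fin.ext_iff] at h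
  have hne12 : c1 ≠ c2 := fun h => by simp [hc1, hc2, Fin.ext_iff] at h
  -- define the bad sets
  let B : Fin n → Fin n → Finset (Fin n) :=
    fun c t => Finset.univ.filter (fun i : Fin n => P i c = some t)
  have hB1 : ∀ c t, (B c t).card ≤ 1 := by
    intro c t
    apply Finset.card_le_one.mpr
    intro a ha b hb
    simp only [B, Finset.mem_filter] at ha hb
    exact hP.2 a b c t ha.2 hb.2
  set Bad : Finset (Fin n) := B c0 a1 ∪ B c0 a2 ∪ B c1 b0 ∪ B c1 b2 ∪ B c2 d0 ∪ B c2 d1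
    with hBad
  have hBadcard : Bad.card ≤ 6 := by
    have u1 := Finset.card_union_le (B c0 a1) (B c0 a2)
    have u2 := Finset.card_union_le (B c0 a1 ∪ B c0 a2) (B c1 b0)
    have u3 := Finset.card_union_le (B c0 a1 ∪ B c0 a2 ∪ B c1 b0) (B c1 b2)
    have u4 := Finset.card_union_le (B c0 a1 ∪ B c0 a2 ∪ B c1 b0 ∪ B c1 b2) (B c2 d0)
    have u5 := Finset.card_union_le (B c0 a1 ∪ B c0 a2 ∪ B c1 b0 ∪ B c1 b2 ∪ B c2 d0)
      (B c2 d1)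
    have e1 := hB1 c0 a1; have e2 := hB1 c0 a2; have e3 := hB1 c1 b0
    have e4 := hB1 c1 b2; have e5 := hB1 c2 d0; have e6 := hB1 c2 d1
    rw [hBad]; omega
  -- the good rows
  set G : Finset (Fin n) := Finset.univ.filter (fun i : Fin n => 2 ≤ i.val) with hG
  have hGcard : 7 ≤ G.card := by
    have hsplit := Finset.card_filter_add_card_filter_not
      (s := (Finset.univ : Finset (Fin n))) (p := fun i : Fin n => 2 ≤ i.val)
    have hsmall : (Finset.univ.filter (fun i : Fin n => ¬ 2 ≤ i.val)).card ≤ 2 := by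
      have hle : (Finset.univ.filter (fun i : Fin n => ¬ 2 ≤ i.val)).card
          ≤ (Finset.range 2).card := by
        apply Finset.card_le_card_of_injOn (fun i => i.val)
        · intro x hx
          simp only [Finset.mem_coe, Finset.mem_filter] at hx
          simp only [Finset.mem_coe, Finset.mem_range]
          omega
        · intro a _ b _ h
          exact Fin.val_injective h
      simpa using hle
    have huniv : (Finset.univ : Finset (Fin n)).card = n := by simp
    rw [hG]; omega
  have hnon : (G \ Bad).Nonempty := by
    rw [Finset.sdiff_nonempty]
    intro hsub
    have := Finset.card_le_card hsub
    omega
  obtain ⟨i, hi⟩ := hnon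
  rw [Finset.mem_sdiff] at hi
  obtain ⟨hiG, hiB⟩ := hi
  have hi2 : 2 ≤ i.val := (Finset.mem_filter.mp hiG).2
  simp only [hBad, Finset.mem_union, not_or, B, Finset.mem_filter, Finset.mem_univ,
    true_and] at hiB
  obtain ⟨⟨⟨⟨⟨n1, n2⟩, n3⟩, n4⟩, n5⟩, n6⟩ := hiB
  refine ⟨i, hi2, ⟨?_, ?_, ?_⟩, ⟨?_, ?_, ?_⟩, ⟨?_, ?_, ?_⟩⟩
  · rw [ha1]; exact fun h => n1 h
  · rw [ha2]; exact fun h => n2 h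
  · rw [ha1, ha2]; exact hrow j c1 c2 a1 a2 ha1 ha2 hne12
  · rw [hb0]; exact fun h => n3 h.symm
  · rw [hb0, hb2]; exact hrow k c0 c2 b0 b2 hb0 hb2 hne02
  · rw [hb2]; exact fun h => n4 h
  · rw [hd0, hd1]; exact hrow l c0 c1 d0 d1 hd0 hd1 hne01
  · rw [hd0]; exact fun h => n5 h.symm
  · rw [hd1]; exact fun h => n6 h.symm
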